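/- Let X be an absolutely continuous nonnegative random variable with finite mean, pdf f, cdf F with F(x) > 0 for all x > 0, reversed hazard rate τ(x) = f(x)/F(x), cumulative reversed hazard rate T(x) = −log F(x), and finite cumulative entropy CE(X) = −∫_0^∞ F(x)·log F(x) dx. Then E[T(X)/τ(X)] = ∫_0^∞ (T(x)/τ(x))·f(x) dx = CE(X), and Cov(X, T(X)) = E[X·T(X)] − E[X]·E[T(X)] = −CE(X). -/

import Mathlib

open MeasureTheory Set Filter

/-- For `X` with reversed hazard rate `τ = f/F`, cumulative reversed hazard
rate `T = -log F`, and finite cumulative entropy `CE(X) = -∫_0^∞ F log F`, one has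
`E[T(X)/τ(X)] = CE(X)` and `Cov(X, T(X)) = E[X T(X)] - E[X] E[T(X)] = -CE(X)`. -/
theorem ce_as_expectation_and_covariance
    (F f : ℝ → ℝ)
    (hFcont : Continuous F)
    (hderiv : ∀ x, 0 < x → HasDerivAt F (f x) x)
    (hf : ∀ x, 0 ≤ f x) (hfm : Measurable f)
    (hfpos : ∀ x, 0 < x → 0 < f x)
    (hF0 : F 0 = 0)
    (hFpos : ∀ x, 0 < x → 0 < F x)
    (hFle : ∀ x, F x ≤ 1)
    (hFlim : Tendsto F atTop (nhds 1))
    (hmean : IntegrableOn (fun x => x * f x) (Ioi 0))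
    (hCE : IntegrableOn (fun x => F x * Real.log (F x)) (Ioi 0)) :
    (∫ x in Ioi 0, ((-Real.log (F x)) / (f x / F x)) * f x
        = -∫ x in Ioi 0, F x * Real.log (F x))
    ∧ ((∫ x in Ioi 0, x * ((-Real.log (F x)) * f x))
          - (∫ x in Ioi 0, x * f x) * (∫ x in Ioi 0, (-Real.log (F x)) * f x)
        = -(-∫ x in Ioi 0, F x * Real.log (F x))) := by
  -- `-log (F x) ≥ 0` for `x > 0`
  have hlog_nonneg : ∀ x, 0 < x → 0 ≤ -Real.log (F x) := fun x hx => by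
    have := Real.log_nonpos (hFpos x hx).le (hFle x); linarith
  -- Part 1: pointwise identity on `Ioi 0`
  have part1 : ∫ x in Ioi 0, ((-Real.log (F x)) / (f x / F x)) * f x
      = -∫ x in Ioi 0, F x * Real.log (F x) := by
    rw [← integral_neg]
    refine setIntegral_congr_fun measurableSet_Ioi (fun x hx => ?_)
    have hF := hFpos x hx
    have hfx := hfpos x hx
    rw [div_div_eq_mul_div, div_mul_cancel₀ _ hfx.ne']
    ring
  refine ⟨part1, ?_⟩
  -- E[T(X)] = 1, via FTC on `G = F - F log F` with `G' = f ⬝ (-log F)`.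
  set G : ℝ → ℝ := fun x => F x - F x * Real.log (F x) with hGdef
  have hGderiv : ∀ x ∈ Ioi 0, HasDerivAt G (f x * (-Real.log (F x))) x := by
    intro x hx
    have hF := hderiv x hx
    have hlog : HasDerivAt (fun y => Real.log (F y)) (f x / F x) x :=
      hF.log (hFpos x hx).ne'
    have h1 : HasDerivAt (fun y => F y * Real.log (F y))
        (f x * Real.log (F x) + F x * (f x / F x)) x := hF.mul hlog
    have h2 := hF.sub h1
    have e : f x * (-Real.log (F x)) = f x - (f x * Real.log (F x) + F x * (f x / F x)) := by
      rw [mul_div_assoc', mul_div_cancel_left₀ _ (hFpos x hx).ne']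
      ring
    rw [e]
    exact h2
  have hGcont : ContinuousWithinAt G (Ici 0) 0 :=
    ((hFcont.sub (Real.continuous_mul_log.comp hFcont))).continuousWithinAt
  have hGtend : Tendsto G atTop (nhds 1) := by
    have hc : Tendsto (fun t : ℝ => t - t * Real.log t) (nhds 1) (nhds 1) := by
      have := (continuous_id.sub Real.continuous_mul_log).tendsto 1
      simpa [Pi.sub_def] using this
    exact hc.comp hFlim
  have hG'nonneg : ∀ x ∈ Ioi 0, 0 ≤ f x * (-Real.log (F x)) := fun x hx =>
    mul_nonneg (hf x) (hlog_nonneg x hx)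
  have hG0 : G 0 = 0 := by simp [hGdef, hF0]
  have hTint : IntegrableOn (fun x => f x * (-Real.log (F x))) (Ioi 0) :=
    integrableOn_Ioi_deriv_of_nonneg hGcont hGderiv hG'nonneg hGtend
  have hT1 : ∫ x in Ioi 0, f x * (-Real.log (F x)) = 1 := by
    rw [integral_Ioi_of_hasDerivAt_of_nonneg hGcont hGderiv hG'nonneg hGtend, hG0, sub_zero]
  -- tail integral of f : `∫_{Ioi a} f = 1 - F a` for `a ≥ 0`
  have hFtailInt : ∀ a : ℝ, 0 ≤ a → IntegrableOn f (Ioi a) := fun a ha =>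
    integrableOn_Ioi_deriv_of_nonneg hFcont.continuousWithinAt
      (fun x hx => hderiv x (lt_of_le_of_lt ha hx)) (fun x _ => hf x) hFlim
  have hFtail : ∀ a : ℝ, 0 ≤ a → ∫ x in Ioi a, f x = 1 - F a := fun a ha =>
    integral_Ioi_of_hasDerivAt_of_nonneg hFcont.continuousWithinAt
      (fun x hx => hderiv x (lt_of_le_of_lt ha hx)) (fun x _ => hf x) hFlim
  -- monotonicity of F on `Ici 0`
  have hmono : MonotoneOn F (Ici 0) := by
    have : StrictMonoOn F (Ici 0) := by
      apply strictMonoOn_of_deriv_pos (convex_Ici 0) hFcont.continuousOn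
      intro x hx
      rw [interior_Ici] at hx
      rw [(hderiv x hx).deriv]
      exact hfpos x hx
    exact this.monotoneOn
  -- the tail of the mean integral tends to 0
  have htail0 : Tendsto (fun a => ∫ x in Ioi a, x * f x) atTop (nhds 0) := by
    have h1 := intervalIntegral_tendsto_integral_Ioi 0 hmean tendsto_id
    have h2 : Tendsto (fun a : ℝ => (∫ x in Ioi (0:ℝ), x * f x) - ∫ x in (0:ℝ)..a, x * f x)
        atTop (nhds ((∫ x in Ioi (0:ℝ), x * f x) - ∫ x in Ioi (0:ℝ), x * f x)) :=
      tendsto_const_nhds.sub h1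
    rw [sub_self] at h2
    apply h2.congr'
    filter_upwards [eventually_gt_atTop 0] with a ha
    rw [intervalIntegral.integral_of_le ha.le]
    have hsplit : ∫ x in Ioi (0:ℝ), x * f x
        = (∫ x in Ioc 0 a, x * f x) + ∫ x in Ioi a, x * f x := by
      rw [← setIntegral_union (Ioc_disjoint_Ioi le_rfl) measurableSet_Ioi
        (hmean.mono_set Ioc_subset_Ioi_self) (hmean.mono_set (Ioi_subset_Ioi ha.le)),
        Ioc_union_Ioi_eq_Ioi ha.le]
    rw [hsplit]; ring
  -- `x (1 - F x) → 0`
  have hxF : ∀ x : ℝ, 0 < x → x * (1 - F x) ≤ ∫ t in Ioi x, t * f t := by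
    intro x hx
    rw [← hFtail x hx.le, ← integral_const_mul]
    refine setIntegral_mono_on ((hFtailInt x hx.le).const_mul x)
      (hmean.mono_set (Ioi_subset_Ioi hx.le)) measurableSet_Ioi (fun t ht => ?_)
    exact mul_le_mul_of_nonneg_right (le_of_lt ht) (hf t)
  have hxFlim : Tendsto (fun x => x * (1 - F x)) atTop (nhds 0) := by
    refine tendsto_of_tendsto_of_tendsto_of_le_of_le' tendsto_const_nhds htail0 ?_ ?_
    · filter_upwards [eventually_gt_atTop 0] with x hx
      exact mul_nonneg hx.le (by linarith [hFle x])
    · filter_upwards [eventually_gt_atTop 0] with x hx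
      exact hxF x hx
  -- `x F(x) (-log F(x)) → 0`
  have hKbound : ∀ x : ℝ, 0 < x → F x * (-Real.log (F x)) ≤ 1 - F x := by
    intro x hx
    have h1 := Real.one_sub_inv_le_log_of_pos (hFpos x hx)
    have h2 : F x * (1 - (F x)⁻¹) ≤ F x * Real.log (F x) :=
      mul_le_mul_of_nonneg_left h1 (hFpos x hx).le
    have h3 : F x * (1 - (F x)⁻¹) = F x - 1 := by
      rw [mul_sub, mul_one, mul_inv_cancel₀ (hFpos x hx).ne']
    nlinarith
  have hKlim : Tendsto (fun x => x * (F x * (-Real.log (F x)))) atTop (nhds 0) := by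
    refine tendsto_of_tendsto_of_tendsto_of_le_of_le' tendsto_const_nhds hxFlim ?_ ?_
    · filter_upwards [eventually_gt_atTop 0] with x hx
      exact mul_nonneg hx.le (mul_nonneg (hFpos x hx).le (hlog_nonneg x hx))
    · filter_upwards [eventually_gt_atTop 0] with x hx
      exact mul_le_mul_of_nonneg_left (hKbound x hx) hx.le
  -- integrability of `x f(x) (-log F x)` on `Ioi 0`
  have hmeasXT : Measurable (fun x => x * (f x * (-Real.log (F x)))) :=
    measurable_id.mul (hfm.mul ((Real.measurable_log.comp hFcont.measurable).neg))
  have hXT : IntegrableOn (fun x => x * (f x * (-Real.log (F x)))) (Ioi 0) := by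
    have hsplit : Ioi (0:ℝ) = Ioc 0 1 ∪ Ioi 1 := (Ioc_union_Ioi_eq_Ioi zero_le_one).symm
    rw [hsplit]
    apply IntegrableOn.union
    · -- on (0,1] bounded by f ⬝ (-log F)
      refine Integrable.mono (hTint.mono_set Ioc_subset_Ioi_self)
        hmeasXT.aestronglyMeasurable ?_
      rw [ae_restrict_iff' measurableSet_Ioc]
      filter_upwards with x hx
      have h1 : 0 ≤ f x * (-Real.log (F x)) := mul_nonneg (hf x) (hlog_nonneg x hx.1)
      rw [Real.norm_eq_abs, Real.norm_eq_abs, abs_of_nonneg (mul_nonneg hx.1.le h1),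
        abs_of_nonneg h1]
      calc x * (f x * (-Real.log (F x))) ≤ 1 * (f x * (-Real.log (F x))) :=
            mul_le_mul_of_nonneg_right hx.2 h1
        _ = f x * (-Real.log (F x)) := one_mul _
    · -- on (1,∞) bounded by (-log F 1) ⬝ (x f x)
      refine Integrable.mono ((hmean.mono_set (Ioi_subset_Ioi zero_le_one)).const_mul
        (-Real.log (F 1))) hmeasXT.aestronglyMeasurable ?_
      rw [ae_restrict_iff' measurableSet_Ioi]
      filter_upwards with x hx
      have hx0 : (0:ℝ) < x := lt_trans zero_lt_one hx
      have hC : 0 ≤ -Real.log (F 1) := hlog_nonneg 1 zero_lt_one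
      have hmle : Real.log (F 1) ≤ Real.log (F x) :=
        Real.log_le_log (hFpos 1 zero_lt_one)
          (hmono (mem_Ici.mpr zero_le_one) (mem_Ici.mpr hx0.le) hx.le)
      have h1 : 0 ≤ f x * (-Real.log (F x)) := mul_nonneg (hf x) (hlog_nonneg x hx0)
      rw [Real.norm_eq_abs, Real.norm_eq_abs, abs_of_nonneg (mul_nonneg hx0.le h1),
        abs_of_nonneg (mul_nonneg hC (mul_nonneg hx0.le (hf x)))]
      have : x * (f x * (-Real.log (F x))) ≤ x * (f x * (-Real.log (F 1))) := by
        apply mul_le_mul_of_nonneg_left _ hx0.le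
        apply mul_le_mul_of_nonneg_left (by linarith) (hf x)
      linarith [this, le_of_eq (by ring : x * (f x * (-Real.log (F 1)))
        = -Real.log (F 1) * (x * f x))]
  -- FTC with `K x = -(x (F x log F x))`
  set K : ℝ → ℝ := fun x => -(x * (F x * Real.log (F x))) with hKdef
  set E : ℝ → ℝ := fun x =>
    -(F x * Real.log (F x)) + x * (f x * (-Real.log (F x))) - x * f x with hEdef
  have hKderiv : ∀ x ∈ Ioi 0, HasDerivAt K (E x) x := by
    intro x hx
    have hF := hderiv x hx
    have hlog : HasDerivAt (fun y => Real.log (F y)) (f x / F x) x :=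
      hF.log (hFpos x hx).ne'
    have h1 : HasDerivAt (fun y => F y * Real.log (F y))
        (f x * Real.log (F x) + F x * (f x / F x)) x := hF.mul hlog
    have h2 : HasDerivAt (fun y => y * (F y * Real.log (F y)))
        (1 * (F x * Real.log (F x)) + x * (f x * Real.log (F x) + F x * (f x / F x))) x :=
      (hasDerivAt_id x).mul h1
    have h3 := h2.neg
    have e : E x = -(1 * (F x * Real.log (F x)) + x * (f x * Real.log (F x) + F x * (f x / F x))) := by
      simp only [hEdef, mul_div_assoc', mul_div_cancel_left₀ _ (hFpos x hx).ne']
      ring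
    rw [e]
    exact h3
  have hEint : IntegrableOn E (Ioi 0) := by
    exact (hCE.neg.add hXT).sub hmean
  have hKcont : ContinuousWithinAt K (Ici 0) 0 := by
    have : Continuous K := by
      have : Continuous fun x => x * (F x * Real.log (F x)) := by
        have h := continuous_id.mul (Real.continuous_mul_log.comp hFcont)
        convert h using 1
        exact rfl
      exact this.neg
    exact this.continuousWithinAt
  have hKtend : Tendsto K atTop (nhds 0) := by
    apply hKlim.congr
    intro x
    simp only [hKdef]
    ring
  have hK0 : K 0 = 0 := by simp [hKdef]
  have hmain : ∫ x in Ioi 0, E x = 0 - K 0 :=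
    integral_Ioi_of_hasDerivAt_of_tendsto hKcont hKderiv hEint hKtend
  rw [hK0, sub_zero] at hmain
  rw [hEdef] at hmain
  have hint1 : IntegrableOn (fun x => -(F x * Real.log (F x))) (Ioi 0) := hCE.neg
  have hsum : IntegrableOn
      (fun x => -(F x * Real.log (F x)) + x * (f x * (-Real.log (F x)))) (Ioi 0) :=
    hint1.add hXT
  rw [integral_sub hsum hmean, integral_add hint1 hXT, integral_neg] at hmain
  -- finish
  have hT1' : ∫ x in Ioi 0, (-Real.log (F x)) * f x = 1 := by
    rw [← hT1]
    exact setIntegral_congr_fun measurableSet_Ioi (fun x _ => mul_comm _ _)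
  have hXT' : ∫ x in Ioi 0, x * ((-Real.log (F x)) * f x)
      = ∫ x in Ioi 0, x * (f x * (-Real.log (F x))) := by
    exact setIntegral_congr_fun measurableSet_Ioi (fun x _ => by ring)
  rw [hXT', hT1', mul_one, neg_neg]
  linarith
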